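/- Let μ be a finite Radon measure on a topological space Ω and let (f_α)_{α∈A} be an increasing net of lower semi-continuous functions on Ω converging pointwise to f. Assume that f_{α_0} is μ-integrable for some α_0 ∈ A and that f is μ-integrable. Then lim_α ∫_Ω f_α dμ = ∫_Ω f dμ. -/

import Mathlib

open MeasureTheory Filter ENNReal

/-- Monotone convergence along a net of lower semi-continuous functions for a finite
Radon (inner regular) measure. -/
theorem tendsto_integral_of_monotone_net {Ω : Type*} [TopologicalSpace Ω]
    [MeasurableSpace Ω] [BorelSpace Ω]
    (μ : Measure Ω) [IsFiniteMeasure μ] [μ.InnerRegular]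
    {A : Type*} [Preorder A] [Nonempty A] [IsDirected A (· ≤ ·)]
    (f : A → Ω → ℝ) (hmono : Monotone f)
    (hlsc : ∀ α, LowerSemicontinuous (f α))
    (g : Ω → ℝ) (hconv : ∀ ω, Tendsto (fun α => f α ω) atTop (nhds (g ω)))
    (α₀ : A) (hint₀ : Integrable (f α₀) μ) (hintg : Integrable g μ) :
    Tendsto (fun α => ∫ ω, f α ω ∂μ) atTop (nhds (∫ ω, g ω ∂μ)) := by
  classical
  have hm : ∀ α, Measurable (f α) := fun α => (hlsc α).measurable
  have hle : ∀ α ω, f α ω ≤ g ω := by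
    intro α ω
    refine ge_of_tendsto (hconv ω) ?_
    filter_upwards [eventually_ge_atTop α] with β hβ
    exact hmono hβ ω
  have hfint : ∀ α, α₀ ≤ α → Integrable (f α) μ := by
    intro α hα
    refine Integrable.mono (hint₀.abs.add hintg.abs) (hm α).aestronglyMeasurable
      (Filter.Eventually.of_forall fun ω => ?_)
    have h1 := hmono hα ω
    have h2 := hle α ω
    have h3 := neg_abs_le (f α₀ ω)
    have h4 := le_abs_self (g ω)
    have h5 := abs_nonneg (f α₀ ω)
    have h6 := abs_nonneg (g ω)
    simp only [Real.norm_eq_abs, Pi.add_apply]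
    have h7 : |f α ω| ≤ |f α₀ ω| + |g ω| := abs_le.2 ⟨by linarith, by linarith⟩
    have h8 : |(|f α₀ ω| + |g ω|)| = |f α₀ ω| + |g ω| := abs_of_nonneg (by positivity)
    linarith
  -- key approximation claim
  have key : ∀ ε : ℝ, 0 < ε →
      ∃ α₁, α₀ ≤ α₁ ∧ (∫ ω, g ω ∂μ) - (∫ ω, f α₁ ω ∂μ) < ε := by
    intro ε hε
    set M : ℝ := (μ Set.univ).toReal with hMdef
    have hM0 : 0 ≤ M := ENNReal.toReal_nonneg
    set δ : ℝ := ε / 4 / (M + 1) with hδdef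
    have hδpos : 0 < δ := by positivity
    have hδM : δ * (M + 1) = ε / 4 := div_mul_cancel₀ _ (by positivity)
    -- measurable representative of g
    set g' : Ω → ℝ := hintg.1.mk g with hg'def
    have hg'm : StronglyMeasurable g' := hintg.1.stronglyMeasurable_mk
    have hgg' : g =ᵐ[μ] g' := hintg.1.ae_eq_mk
    set N : Set Ω := toMeasurable μ {ω | g ω ≠ g' ω} with hNdef
    have hNm : MeasurableSet N := measurableSet_toMeasurable _ _
    have hN0 : μ N = 0 := by
      rw [hNdef, measure_toMeasurable]
      exact hgg'
    have hNsub : {ω | g ω ≠ g' ω} ⊆ N := subset_toMeasurable _ _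
    -- absolute continuity of the integral of g - f α₀
    have hθ₀ : Integrable (fun ω => g ω - f α₀ ω) μ := hintg.sub hint₀
    have hfin : ∫⁻ ω, ENNReal.ofReal ‖g ω - f α₀ ω‖ ∂μ ≠ ∞ := by
      simp_rw [ofReal_norm]
      exact hθ₀.2.ne
    obtain ⟨η₀, hη₀pos, hη₀⟩ :=
      exists_pos_setLIntegral_lt_of_measure_lt hfin
        (ε := ENNReal.ofReal (ε / 4)) (ENNReal.ofReal_pos.2 (by positivity)).ne'
    set η : ℝ≥0∞ := min η₀ 1 with hηdef
    have hηpos : 0 < η := lt_min hη₀pos zero_lt_one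
    have hηtop : η ≠ ∞ := ((min_le_right η₀ 1).trans_lt ENNReal.one_lt_top).ne
    set η' : ℝ≥0∞ := η / 2 with hη'def
    have hη'pos : 0 < η' := ENNReal.div_pos hηpos.ne' (by norm_num)
    have hη'top : η' ≠ ∞ := ne_top_of_le_ne_top hηtop ENNReal.half_le_self
    -- truncation sets
    set C : ℕ → Set Ω := fun n => g' ⁻¹' (Set.Ico (-(δ * n)) (δ * n)) with hCdef
    have hCm : ∀ n, MeasurableSet (C n) := fun n => hg'm.measurable measurableSet_Ico
    have hCmono : Monotone C := by
      intro a b hab ω hω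
      simp only [hCdef, Set.mem_preimage, Set.mem_Ico] at hω ⊢
      have hab' : (a : ℝ) ≤ b := Nat.cast_le.2 hab
      have : δ * a ≤ δ * b := by nlinarith
      exact ⟨by linarith [hω.1], by linarith [hω.2]⟩
    have hCunion : ⋃ n, C n = Set.univ := by
      ext ω
      simp only [Set.mem_iUnion, Set.mem_univ, iff_true, hCdef, Set.mem_preimage, Set.mem_Ico]
      obtain ⟨n, hn⟩ := exists_nat_gt (|g' ω| / δ)
      have habs : |g' ω| < δ * n := by
        rw [div_lt_iff₀ hδpos] at hn; linarith
      exact ⟨n, by linarith [neg_abs_le (g' ω)], by linarith [le_abs_self (g' ω)]⟩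
    have htendC : Tendsto (fun n => μ (C n)) atTop (nhds (μ Set.univ)) := by
      have h := tendsto_measure_iUnion_atTop (μ := μ) hCmono
      rwa [hCunion] at h
    have hev : ∀ᶠ n in atTop, μ Set.univ < μ (C n) + η' := by
      rcases lt_or_ge (μ Set.univ) η' with h | h
      · exact Eventually.of_forall fun n => lt_of_lt_of_le h le_add_self
      · have huniv0 : μ Set.univ ≠ 0 := (lt_of_lt_of_le hη'pos h).ne'
        have h1 : μ Set.univ - η' < μ Set.univ :=
          ENNReal.sub_lt_self (measure_ne_top μ _) huniv0 hη'pos.ne'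
        filter_upwards [(tendsto_order.1 htendC).1 _ h1] with n hn2
        exact (ENNReal.sub_lt_iff_lt_right hη'top h).1 hn2
    obtain ⟨n, hn⟩ := hev.exists
    -- the slabs
    set T : ℤ → Set Ω := fun k => g' ⁻¹' (Set.Ico (δ * (k : ℝ)) (δ * ((k : ℝ) + 1))) with hTdef
    have hTm : ∀ k, MeasurableSet (T k) := fun k => hg'm.measurable measurableSet_Ico
    set F : Finset ℤ := Finset.Icc (-(n : ℤ)) n with hFdef
    have hCcover : C n ⊆ ⋃ k ∈ F, T k := by
      intro ω hω
      simp only [hCdef, Set.mem_preimage, Set.mem_Ico] at hω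
      set x : ℝ := g' ω / δ with hxdef
      have hx : δ * x = g' ω := by
        rw [hxdef, mul_div_cancel₀ _ hδpos.ne']
      set k : ℤ := ⌊x⌋ with hkdef
      have hk1 : (k : ℝ) ≤ x := Int.floor_le x
      have hk2 : x < (k : ℝ) + 1 := Int.lt_floor_add_one x
      have hkF : k ∈ F := by
        rw [hFdef, Finset.mem_Icc]
        constructor
        · rw [hkdef]
          rw [Int.le_floor]
          push_cast
          rw [le_div_iff₀ hδpos]
          nlinarith [hω.1]
        · have : k < (n : ℤ) := by
            rw [hkdef, Int.floor_lt]
            push_cast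
            rw [div_lt_iff₀ hδpos]
            nlinarith [hω.2]
          exact this.le
      refine Set.mem_biUnion hkF ?_
      simp only [hTdef, Set.mem_preimage, Set.mem_Ico]
      constructor
      · nlinarith
      · nlinarith
    -- compact approximations inside each slab minus the null set
    have hA'm : ∀ k : ℤ, MeasurableSet (T k \ N) := fun k => (hTm k).diff hNm
    set c : ℝ≥0∞ := (F.card : ℝ≥0∞) with hcdef
    set ε₂ : ℝ≥0∞ := η' / 2 / (c + 1) with hε₂def
    have hc1 : (c + 1) ≠ 0 := (lt_of_lt_of_le zero_lt_one le_add_self).ne'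
    have hc2 : (c + 1) ≠ ∞ := ENNReal.add_ne_top.2 ⟨ENNReal.natCast_ne_top _, ENNReal.one_ne_top⟩
    have hε₂pos : ε₂ ≠ 0 := by
      rw [hε₂def]
      exact (ENNReal.div_pos (ENNReal.div_pos hη'pos.ne' (by norm_num)).ne' hc2).ne'
    have hK : ∀ k : ℤ, ∃ K, K ⊆ T k \ N ∧ IsCompact K ∧ μ (T k \ N) < μ K + ε₂ :=
      fun k => (hA'm k).exists_isCompact_lt_add (measure_ne_top μ _) hε₂pos
    choose K hK1 hK2 hK3 using hK
    -- a single index dominating on each compact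
    have hcov : ∀ k : ℤ, ∃ β : A, ∀ ω ∈ K k, δ * (k : ℝ) - δ < f β ω := by
      intro k
      have hopen : ∀ α : A, IsOpen ((f α) ⁻¹' Set.Ioi (δ * (k : ℝ) - δ)) :=
        fun α => (hlsc α).isOpen_preimage _
      have hcover : K k ⊆ ⋃ α : A, (f α) ⁻¹' Set.Ioi (δ * (k : ℝ) - δ) := by
        intro ω hω
        have hωA : ω ∈ T k \ N := hK1 k hω
        have hg : g ω = g' ω := by
          by_contra h
          exact hωA.2 (hNsub h)
        have hgk : δ * (k : ℝ) - δ < g ω := by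
          have h1 : δ * (k : ℝ) ≤ g' ω := hωA.1.1
          rw [hg]; linarith
        obtain ⟨β, hβ⟩ := ((hconv ω).eventually_const_lt hgk).exists
        exact Set.mem_iUnion.2 ⟨β, hβ⟩
      obtain ⟨t, ht⟩ := (hK2 k).elim_finite_subcover _ hopen hcover
      obtain ⟨β, hβ⟩ := t.exists_le
      refine ⟨β, fun ω hω => ?_⟩
      obtain ⟨α, hαt, hωα⟩ := Set.mem_iUnion₂.1 (ht hω)
      exact lt_of_lt_of_le hωα (hmono (hβ α hαt) ω)
    choose β hβ using hcov
    obtain ⟨α₁, hα₁⟩ := (insert α₀ (F.image β)).exists_le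
    have hα₀₁ : α₀ ≤ α₁ := hα₁ α₀ (Finset.mem_insert_self _ _)
    have hβα₁ : ∀ k ∈ F, β k ≤ α₁ :=
      fun k hk => hα₁ _ (Finset.mem_insert_of_mem (Finset.mem_image_of_mem β hk))
    -- the good set
    set E : Set Ω := ⋃ k ∈ F, ((T k \ N) ∩ (f α₁) ⁻¹' Set.Ioi (δ * (k : ℝ) - δ)) with hEdef
    have hEm : MeasurableSet E :=
      F.measurableSet_biUnion fun k _ => (hA'm k).inter ((hm α₁) measurableSet_Ioi)
    have hEbound : ∀ ω ∈ E, g ω - f α₁ ω ≤ 2 * δ := by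
      intro ω hω
      obtain ⟨k, hkF, hk⟩ := Set.mem_iUnion₂.1 hω
      obtain ⟨⟨hkT, hkN⟩, hkU⟩ := hk
      have hg : g ω = g' ω := by
        by_contra h
        exact hkN (hNsub h)
      have h1 : g' ω < δ * ((k : ℝ) + 1) := hkT.2
      have h2 : δ * (k : ℝ) - δ < f α₁ ω := hkU
      nlinarith [hg]
    -- complement has small measure
    have hDk : ∀ k ∈ F, μ ((T k \ N) \ (f α₁) ⁻¹' Set.Ioi (δ * (k : ℝ) - δ)) ≤ ε₂ := by
      intro k hk
      have hKsub : K k ⊆ (T k \ N) ∩ (f α₁) ⁻¹' Set.Ioi (δ * (k : ℝ) - δ) :=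
        fun ω hω => ⟨hK1 k hω, lt_of_lt_of_le (hβ k ω hω) (hmono (hβα₁ k hk) ω)⟩
      have h1 : μ (T k \ N) < μ ((T k \ N) ∩ (f α₁) ⁻¹' Set.Ioi (δ * (k : ℝ) - δ)) + ε₂ :=
        lt_of_lt_of_le (hK3 k) (add_le_add_left (measure_mono hKsub) _)
      rw [← measure_inter_add_diff (T k \ N) ((hm α₁) measurableSet_Ioi)] at h1
      exact ((ENNReal.add_lt_add_iff_left (measure_ne_top μ _)).1 h1).le
    have hEc : Eᶜ ⊆ ((C n)ᶜ ∪ N) ∪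
        ⋃ k ∈ F, ((T k \ N) \ (f α₁) ⁻¹' Set.Ioi (δ * (k : ℝ) - δ)) := by
      intro ω hω
      by_cases hωN : ω ∈ N
      · exact Or.inl (Or.inr hωN)
      by_cases hωC : ω ∈ C n
      · right
        obtain ⟨k, hkF, hk⟩ := Set.mem_iUnion₂.1 (hCcover hωC)
        refine Set.mem_biUnion hkF ⟨⟨hk, hωN⟩, ?_⟩
        intro hU
        exact hω (Set.mem_biUnion hkF ⟨⟨hk, hωN⟩, hU⟩)
      · exact Or.inl (Or.inl hωC)
    have hCn : μ (C n)ᶜ < η' := by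
      rw [measure_compl (hCm n) (measure_ne_top μ _)]
      rw [ENNReal.sub_lt_iff_lt_right (measure_ne_top μ _) (measure_mono (Set.subset_univ _))]
      rwa [add_comm]
    have hsum : c * ε₂ ≤ η' / 2 := by
      have h1 : c * ε₂ ≤ (c + 1) * ε₂ := mul_le_mul_left le_self_add _
      rwa [hε₂def, ENNReal.mul_div_cancel hc1 hc2] at h1
    have hμEc : μ Eᶜ < η₀ := by
      have hchain : μ Eᶜ < η := by
        calc μ Eᶜ ≤ μ (((C n)ᶜ ∪ N) ∪
            ⋃ k ∈ F, ((T k \ N) \ (f α₁) ⁻¹' Set.Ioi (δ * (k : ℝ) - δ))) := measure_mono hEc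
          _ ≤ μ ((C n)ᶜ ∪ N) +
              μ (⋃ k ∈ F, ((T k \ N) \ (f α₁) ⁻¹' Set.Ioi (δ * (k : ℝ) - δ))) :=
            measure_union_le _ _
          _ ≤ (μ (C n)ᶜ + μ N) +
              ∑ k ∈ F, μ ((T k \ N) \ (f α₁) ⁻¹' Set.Ioi (δ * (k : ℝ) - δ)) :=
            add_le_add (measure_union_le _ _) (measure_biUnion_finset_le _ _)
          _ ≤ (μ (C n)ᶜ + 0) + ∑ _k ∈ F, ε₂ := by
            rw [hN0]
            exact add_le_add le_rfl (Finset.sum_le_sum hDk)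
          _ = μ (C n)ᶜ + c * ε₂ := by
            rw [add_zero, Finset.sum_const, nsmul_eq_mul, hcdef]
          _ ≤ μ (C n)ᶜ + η' / 2 := add_le_add le_rfl hsum
          _ < η' + η' / 2 := by
            exact ENNReal.add_lt_add_right (ne_top_of_le_ne_top hη'top ENNReal.half_le_self) hCn
          _ ≤ η' + η' := add_le_add le_rfl ENNReal.half_le_self
          _ = η := by rw [hη'def, ENNReal.add_halves]
      exact lt_of_lt_of_le hchain (min_le_left _ _)
    -- integral estimates
    have hfα₁ : Integrable (f α₁) μ := hfint α₁ hα₀₁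
    have hθ₁ : Integrable (fun ω => g ω - f α₁ ω) μ := hintg.sub hfα₁
    have hsplit : ∫ ω, (g ω - f α₁ ω) ∂μ =
        (∫ ω in E, (g ω - f α₁ ω) ∂μ) + ∫ ω in Eᶜ, (g ω - f α₁ ω) ∂μ :=
      (integral_add_compl hEm hθ₁).symm
    have hE1 : ∫ ω in E, (g ω - f α₁ ω) ∂μ ≤ ε / 2 := by
      have h1 : ∫ ω in E, (g ω - f α₁ ω) ∂μ ≤ ∫ _ω in E, (2 * δ) ∂μ :=
        setIntegral_mono_on hθ₁.integrableOn
          (integrableOn_const (measure_ne_top μ E)) hEm hEbound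
      rw [setIntegral_const] at h1
      have h2 : (μ E).toReal ≤ M :=
        (ENNReal.toReal_le_toReal (measure_ne_top μ _) (measure_ne_top μ _)).2
          (measure_mono (Set.subset_univ _))
      have h3 : (0:ℝ) ≤ (μ E).toReal := ENNReal.toReal_nonneg
      rw [smul_eq_mul] at h1
      rw [measureReal_def] at h1
      nlinarith
    have hE2 : ∫ ω in Eᶜ, (g ω - f α₁ ω) ∂μ < ε / 4 := by
      have h1 : ∫ ω in Eᶜ, (g ω - f α₁ ω) ∂μ ≤ ∫ ω in Eᶜ, (g ω - f α₀ ω) ∂μ := by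
        refine setIntegral_mono_on hθ₁.integrableOn hθ₀.integrableOn hEm.compl ?_
        intro ω _
        have := hmono hα₀₁ ω
        linarith
      refine lt_of_le_of_lt h1 ?_
      have h2 := hη₀ Eᶜ hμEc
      have h3 : ‖∫ ω in Eᶜ, (g ω - f α₀ ω) ∂μ‖ ≤
          (∫⁻ ω in Eᶜ, ENNReal.ofReal ‖g ω - f α₀ ω‖ ∂μ).toReal :=
        norm_integral_le_lintegral_norm _
      have h4 : (∫⁻ ω in Eᶜ, ENNReal.ofReal ‖g ω - f α₀ ω‖ ∂μ).toReal < ε / 4 :=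
        ENNReal.toReal_lt_of_lt_ofReal h2
      calc ∫ ω in Eᶜ, (g ω - f α₀ ω) ∂μ ≤ ‖∫ ω in Eᶜ, (g ω - f α₀ ω) ∂μ‖ :=
            le_abs_self _
        _ < ε / 4 := lt_of_le_of_lt h3 h4
    refine ⟨α₁, hα₀₁, ?_⟩
    rw [← integral_sub hintg hfα₁, hsplit]
    linarith
  -- conclude
  rw [Metric.tendsto_nhds]
  intro ε hε
  obtain ⟨α₁, hα₀₁, hlt⟩ := key ε hε
  filter_upwards [eventually_ge_atTop α₁] with α hα
  have hα₀α : α₀ ≤ α := hα₀₁.trans hα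
  have h1 : ∫ ω, f α₁ ω ∂μ ≤ ∫ ω, f α ω ∂μ :=
    integral_mono (hfint α₁ hα₀₁) (hfint α hα₀α) (hmono hα)
  have h2 : ∫ ω, f α ω ∂μ ≤ ∫ ω, g ω ∂μ :=
    integral_mono (hfint α hα₀α) hintg (fun ω => hle α ω)
  rw [Real.dist_eq, abs_of_nonpos (by linarith)]
  linarith
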